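/- For every α ∈ (1,2), the infimum over all real x with g(α,x) ≠ 0 of the ratio Re(−g(α,x))/|g(α,x)| equals |cos(απ/2)|; in particular, Re(−g(α,x)) ≥ |cos(απ/2)|·|g(α,x)| for every real x. -/

import Mathlib

open Matrix

/-- The Grünwald–Letnikov coefficients `g_k^{(α)}`. -/
noncomputable def gcoef (α : ℝ) : ℕ → ℝ
  | 0 => 1
  | (k+1) => (1 - (α + 1) / (k + 1 : ℕ)) * gcoef α k

/-- The WSGD coefficients `w_k^{(α)}`. -/
noncomputable def wcoef (α : ℝ) : ℕ → ℝ
  | 0 => α / 2 * gcoef α 0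
  | (k+1) => α / 2 * gcoef α (k+1) + (2 - α) / 2 * gcoef α k

/-- The generating function `g(α,x) = Σ_{k=0}^∞ w_k^{(α)} e^{𝐢(k-1)x}`. -/
noncomputable def genFun (α : ℝ) (x : ℝ) : ℂ :=
  ∑' k : ℕ, (wcoef α k : ℂ) * Complex.exp (Complex.I * ((k : ℂ) - 1) * (x : ℂ))

open Finset Filter Complex Real
open scoped ENNReal NNReal Topology

set_option maxHeartbeats 800000

section S1
variable {α : ℝ}

lemma gcoef_zero (α : ℝ) : gcoef α 0 = 1 := rfl

lemma gcoef_succ (α : ℝ) (k : ℕ) :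
    gcoef α (k+1) = (1 - (α + 1) / ((k : ℝ) + 1)) * gcoef α k := by
  rw [gcoef]; push_cast; ring_nf

lemma gcoef_one (α : ℝ) : gcoef α 1 = -α := by
  rw [show (1:ℕ) = 0 + 1 from rfl, gcoef_succ, gcoef_zero]; ring

lemma gcoef_rec (α : ℝ) (k : ℕ) :
    ((k : ℝ) + 1) * gcoef α (k+1) = ((k : ℝ) - α) * gcoef α k := by
  rw [gcoef_succ]
  have hk : ((k : ℝ) + 1) ≠ 0 := by positivity
  field_simp
  all_goals ring

lemma gcoef_shift (hα : α ≠ 0) (n : ℕ) :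
    gcoef (α - 1) n = ((α - n) / α) * gcoef α n := by
  induction n with
  | zero => simp [gcoef_zero, hα]
  | succ n ih =>
    have hn : ((n : ℝ) + 1) ≠ 0 := by positivity
    rw [gcoef_succ, ih, gcoef_succ]
    push_cast
    field_simp
    all_goals ring

lemma gcoef_partial_sum (hα : α ≠ 0) (n : ℕ) :
    ∑ k ∈ Finset.range (n+1), gcoef α k = gcoef (α - 1) n := by
  induction n with
  | zero => simp [gcoef_zero]
  | succ n ih =>
    rw [Finset.sum_range_succ, ih, gcoef_shift hα, gcoef_shift hα, gcoef_succ]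
    have hn : ((n : ℝ) + 1) ≠ 0 := by positivity
    push_cast
    field_simp
    all_goals ring

end S1


section S2
variable {α : ℝ} (h1 : 1 < α) (h2 : α < 2)
include h1 h2

lemma gcoef_two : gcoef α 2 = α * (α - 1) / 2 := by
  rw [show (2:ℕ) = 1 + 1 from rfl, gcoef_succ, gcoef_one]; push_cast; ring

lemma gcoef_nonneg : ∀ k, 0 ≤ gcoef α (k + 2) := by
  intro k
  induction k with
  | zero => rw [gcoef_two h1 h2]; nlinarith
  | succ k ih =>
    rw [show k + 1 + 2 = (k + 2) + 1 from rfl, gcoef_succ]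
    have hk : (0:ℝ) < (k:ℝ) + 2 + 1 := by positivity
    have : 0 ≤ 1 - (α + 1) / ((k:ℝ) + 2 + 1) := by
      rw [sub_nonneg, div_le_one hk]; linarith
    push_cast
    nlinarith

-- bounds on h n := gcoef (α-1) n for n ≥ 1
lemma gcoef_shift_bounds : ∀ n : ℕ, gcoef (α - 1) (n+1) ≤ 0 ∧
    -gcoef (α - 1) (n+1) ≤ (α - 1) / (n+1) := by
  intro n
  induction n with
  | zero =>
    rw [gcoef_one]
    norm_num
    linarith
  | succ n ih =>
    obtain ⟨ih1, ih2⟩ := ih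
    rw [show n + 1 + 1 = (n + 1) + 1 from rfl, gcoef_succ]
    push_cast
    have hk : (0:ℝ) < (n:ℝ) + 1 + 1 := by positivity
    have hn1 : (0:ℝ) < (n:ℝ) + 1 := by positivity
    have hf0 : 0 ≤ 1 - (α - 1 + 1) / ((n:ℝ) + 1 + 1) := by
      rw [sub_nonneg, div_le_one hk]; linarith
    constructor
    · exact mul_nonpos_of_nonneg_of_nonpos hf0 ih1
    · have key : (1 - (α - 1 + 1) / ((n:ℝ) + 1 + 1)) * (-gcoef (α-1) (n+1))
          ≤ (1 - (α - 1 + 1) / ((n:ℝ) + 1 + 1)) * ((α-1)/((n:ℝ)+1)) :=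
        mul_le_mul_of_nonneg_left ih2 hf0
      have key2 : (1 - (α - 1 + 1) / ((n:ℝ) + 1 + 1)) * ((α-1)/((n:ℝ)+1))
          ≤ (α - 1) / ((n:ℝ) + 1 + 1) := by
        have e : (1 - (α - 1 + 1) / ((n:ℝ) + 1 + 1)) = ((n:ℝ) + 1 + 1 - α) / ((n:ℝ)+1+1) := by
          field_simp; ring
        rw [e, div_mul_div_comm, div_le_div_iff₀ (by positivity) hk]
        nlinarith [mul_nonneg (sq_nonneg (α-1)) hk.le]
      calc -((1 - (α - 1 + 1) / ((n:ℝ) + 1 + 1)) * gcoef (α - 1) (n + 1))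
          = (1 - (α - 1 + 1) / ((n:ℝ) + 1 + 1)) * (-gcoef (α-1) (n+1)) := by ring
        _ ≤ (α - 1) / ((n:ℝ) + 1 + 1) := le_trans key key2

lemma gcoef_shift_tendsto : Filter.Tendsto (fun n => gcoef (α - 1) (n+1)) Filter.atTop (nhds 0) := by
  have hb := gcoef_shift_bounds h1 h2
  have hmono : Filter.Tendsto (fun n : ℕ => ((n:ℝ) + 1)) Filter.atTop Filter.atTop :=
    Filter.tendsto_atTop_add_const_right _ _ tendsto_natCast_atTop_atTop
  have h1' : Filter.Tendsto (fun n : ℕ => -((α - 1) / ((n:ℝ)+1))) Filter.atTop (nhds 0) := by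
    rw [show (0:ℝ) = -0 by ring]
    exact (Filter.Tendsto.const_div_atTop hmono (α-1)).neg
  exact tendsto_of_tendsto_of_tendsto_of_le_of_le h1' tendsto_const_nhds
    (fun n => by linarith [(hb n).2]) (fun n => (hb n).1)

lemma gcoef_sum_range_le (n : ℕ) : ∑ i ∈ range n, gcoef α (i + 2) ≤ α - 1 := by
  have e : ∑ k ∈ range (n+2), gcoef α k
      = (∑ i ∈ range n, gcoef α (i + 2)) + gcoef α 1 + gcoef α 0 := by
    rw [Finset.sum_range_succ', Finset.sum_range_succ']
  have hp := gcoef_partial_sum (show α ≠ 0 by linarith) (n+1)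
  have hb := (gcoef_shift_bounds h1 h2 n).1
  rw [show n + 1 + 1 = n + 2 from rfl] at hp
  rw [gcoef_zero, gcoef_one] at e
  linarith [e ▸ hp ▸ hb]

lemma gcoef_summable_aux : Summable (fun k => gcoef α (k + 2)) :=
  summable_of_sum_range_le (fun k => gcoef_nonneg h1 h2 k) (gcoef_sum_range_le h1 h2)

lemma gcoef_abs_summable : Summable (fun k => |gcoef α k|) := by
  rw [← summable_nat_add_iff 2]
  have : (fun k => |gcoef α (k + 2)|) = fun k => gcoef α (k + 2) := by
    funext k; exact abs_of_nonneg (gcoef_nonneg h1 h2 k)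
  rw [this]
  exact gcoef_summable_aux h1 h2

lemma gcoef_tsum_zero : ∑' k, gcoef α k = 0 := by
  have hs : Summable (fun k => gcoef α k) := (gcoef_abs_summable h1 h2).of_abs
  have ht := hs.hasSum.tendsto_sum_nat
  have ht2 : Filter.Tendsto (fun n => ∑ k ∈ range (n+1), gcoef α k)
      Filter.atTop (nhds (∑' k, gcoef α k)) := ht.comp (Filter.tendsto_add_atTop_nat 1)
  have ht3 : Filter.Tendsto (fun n => ∑ k ∈ range (n+1), gcoef α k)
      Filter.atTop (nhds 0) := by
    have : (fun n => ∑ k ∈ range (n+1), gcoef α k) = fun n => gcoef (α-1) n := by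
      funext n; exact gcoef_partial_sum (show α ≠ 0 by linarith) n
    rw [this]
    have := gcoef_shift_tendsto h1 h2
    rwa [Filter.tendsto_add_atTop_iff_nat 1] at this
  exact tendsto_nhds_unique ht2 ht3

end S2


section S3
variable {α : ℝ} (h1 : 1 < α) (h2 : α < 2)

lemma mem_eball {z : ℂ} (hz : ‖z‖ < 1) : z ∈ Metric.eball (0 : ℂ) (1 : ℝ≥0∞) := by
  rw [Metric.mem_eball, edist_zero_right, ← ENNReal.coe_one, enorm_lt_coe]
  exact_mod_cast hz

include h1 h2

lemma ccoef_norm_summable : Summable (fun k => ‖((gcoef α k : ℝ) : ℂ)‖) := by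
  simpa [Complex.norm_real, Real.norm_eq_abs] using gcoef_abs_summable h1 h2

lemma F_eq_on_ball : ∀ z : ℂ, ‖z‖ < 1 →
    ∑' k, ((gcoef α k : ℝ) : ℂ) * z ^ k = (1 - z) ^ (α : ℂ) := by
  classical
  set c : ℕ → ℂ := fun k => ((gcoef α k : ℝ) : ℂ) with hc
  set p := FormalMultilinearSeries.ofScalars ℂ c with hp
  have hrad : (1 : ℝ≥0∞) ≤ p.radius := by
    apply p.le_radius_of_summable_norm (r := 1)
    simp only [hp, FormalMultilinearSeries.ofScalars_norm, NNReal.coe_one, one_pow, mul_one]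
    exact ccoef_norm_summable h1 h2
  have hball : HasFPowerSeriesOnBall p.sum p 0 1 :=
    (p.hasFPowerSeriesOnBall (lt_of_lt_of_le zero_lt_one hrad)).mono zero_lt_one hrad
  -- sum formula
  have hFsum : ∀ {z : ℂ}, ‖z‖ < 1 → HasSum (fun n => c n * z ^ n) (p.sum z) := by
    intro z hz
    have hss := hball.hasSum (mem_eball hz)
    rw [zero_add] at hss
    exact hss.congr_fun fun n => by
      rw [hp, FormalMultilinearSeries.ofScalars_apply_eq, smul_eq_mul]

  have hfd := hball.fderiv
  have hdiff : ∀ {z : ℂ}, ‖z‖ < 1 → DifferentiableAt ℂ p.sum z := by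
    intro z hz
    exact (hball.differentiableOn _ (mem_eball hz)).differentiableAt
      (Metric.isOpen_eball.mem_nhds (mem_eball hz))
  -- derivative sum formula
  have hderiv_sum : ∀ {z : ℂ}, ‖z‖ < 1 →
      HasSum (fun n : ℕ => ((n : ℂ) + 1) * c (n+1) * z ^ (n+1)) (z * deriv p.sum z) := by
    intro z hz
    have hs := hfd.hasSum (mem_eball hz)
    rw [zero_add] at hs
    have hs2 := (ContinuousLinearMap.apply ℂ ℂ z).hasSum hs
    have he : ∀ n, (ContinuousLinearMap.apply ℂ ℂ z) (p.derivSeries n fun _ => z)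
        = ((n : ℂ) + 1) * c (n+1) * z ^ (n+1) := by
      intro n
      rw [ContinuousLinearMap.apply_apply, FormalMultilinearSeries.derivSeries_apply_diag]
      rw [hp, FormalMultilinearSeries.ofScalars_apply_eq, ← Nat.cast_smul_eq_nsmul ℂ, smul_eq_mul,
        smul_eq_mul]
      push_cast; ring
    have he2 : (ContinuousLinearMap.apply ℂ ℂ z) (fderiv ℂ p.sum z) = z * deriv p.sum z := by
      rw [ContinuousLinearMap.apply_apply]
      have : (fderiv ℂ p.sum z) z = (fderiv ℂ p.sum z) (z • 1) := by rw [smul_eq_mul, mul_one]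
      rw [this, (fderiv ℂ p.sum z).map_smul, smul_eq_mul, fderiv_apply_one_eq_deriv]
    rw [← he2]
    exact hs2.congr_fun fun n => (he n).symm
  -- the ODE
  have hODE : ∀ {z : ℂ}, ‖z‖ < 1 → (1 - z) * deriv p.sum z + (α : ℂ) * p.sum z = 0 := by
    intro z hz
    rcases eq_or_ne z 0 with rfl | hz0
    · -- at zero : deriv = c 1, sum = c 0
      have hF0 : p.sum 0 = 1 := by
        have hA := (hFsum (by norm_num : ‖(0:ℂ)‖ < 1))
        have h0 : HasSum (fun n : ℕ => c n * (0:ℂ) ^ n) (c 0 * (0:ℂ) ^ 0) :=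
          hasSum_single 0 (fun b hb => by simp [zero_pow hb])
        have := hA.unique (by simpa using h0)
        rw [this, hc]; simp [gcoef_zero]
      have hd0 : deriv p.sum 0 = c 1 := by
        have hs := hfd.hasSum (mem_eball (by norm_num : ‖(0:ℂ)‖ < 1))
        rw [zero_add] at hs
        have hs2 := (ContinuousLinearMap.apply ℂ ℂ 1).hasSum hs
        have he : ∀ n, (ContinuousLinearMap.apply ℂ ℂ 1) (p.derivSeries n fun _ => (0:ℂ))
            = if n = 0 then c 1 else 0 := by
          intro n
          rw [ContinuousLinearMap.apply_apply]
          rcases eq_or_ne n 0 with rfl | hn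
          · have harg : (fun _ : Fin 0 => (0:ℂ)) = (fun _ => (1:ℂ)) := by
              funext i; exact absurd i.2 (by simp)
            rw [harg, FormalMultilinearSeries.derivSeries_apply_diag, hp,
              FormalMultilinearSeries.ofScalars_apply_eq]
            simp
          · have : p.derivSeries n (fun _ => (0:ℂ)) = 0 := by
              apply ContinuousMultilinearMap.map_coord_zero _ (⟨0, Nat.pos_of_ne_zero hn⟩ : Fin n)
              rfl
            simp [this, hn]
        have h0 : HasSum (fun n : ℕ => if n = 0 then c 1 else 0) (c 1) := by
          have := hasSum_single (f := fun n : ℕ => if n = 0 then c 1 else 0) 0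
            (fun b hb => by simp [hb])
          simpa using this
        have hu := (hs2.congr_fun fun n => (he n).symm).unique h0
        have he2 : (ContinuousLinearMap.apply ℂ ℂ 1) (fderiv ℂ p.sum 0) = deriv p.sum 0 := by
          rw [ContinuousLinearMap.apply_apply, fderiv_apply_one_eq_deriv]
        rw [← he2, hu]
      rw [hF0, hd0, hc]; simp [gcoef_one]
    · -- nonzero point
      have hF := hFsum hz
      have hT := hderiv_sum hz
      have hrec : ∀ n : ℕ, ((n : ℂ) + 1) * c (n+1) = ((n : ℂ) - α) * c n := by
        intro n
        have h := congrArg (fun r : ℝ => (r : ℂ)) (gcoef_rec α n)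
        push_cast at h
        rw [hc]; push_cast
        linear_combination h
      have hαF : HasSum (fun n => (α : ℂ) * z * (c n * z ^ n)) ((α : ℂ) * z * p.sum z) :=
        hF.mul_left _
      have hadd := hT.add hαF
      have hterm : ∀ n : ℕ, ((n : ℂ) + 1) * c (n+1) * z ^ (n+1) + (α : ℂ) * z * (c n * z ^ n)
          = (n : ℂ) * c n * z ^ (n+1) := by
        intro n
        rw [hrec n]
        ring
      have hadd2 : HasSum (fun n : ℕ => (n : ℂ) * c n * z ^ (n+1))
          (z * deriv p.sum z + (α : ℂ) * z * p.sum z) :=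
        hadd.congr_fun fun n => (hterm n).symm
      -- the same function has sum z * (z * deriv)
      have hshift : HasSum (fun n : ℕ => (n : ℂ) * c n * z ^ (n+1)) (z * (z * deriv p.sum z)) := by
        have hmul := hT.mul_left z
        have : (fun n : ℕ => z * (((n : ℂ) + 1) * c (n+1) * z ^ (n+1)))
            = fun n => ((n+1 : ℕ) : ℂ) * c (n+1) * z ^ ((n+1)+1) := by
          funext n; push_cast; ring
        rw [this] at hmul
        have := (hasSum_nat_add_iff (f := fun n : ℕ => (n : ℂ) * c n * z ^ (n+1)) 1).mp hmul
        simpa using this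
      have hkey := hadd2.unique hshift
      have hz1 : z * ((1 - z) * deriv p.sum z + (α : ℂ) * p.sum z) = 0 := by
        linear_combination hkey
      rcases mul_eq_zero.mp hz1 with h | h
      · exact absurd h hz0
      · exact h
  -- slit plane facts
  have hslit : ∀ {z : ℂ}, ‖z‖ < 1 → (1 - z) ∈ Complex.slitPlane := by
    intro z hz
    apply Or.inl
    simp only [Complex.sub_re, Complex.one_re]
    have := Complex.re_le_norm z
    linarith
  have hne : ∀ {z : ℂ}, ‖z‖ < 1 → (1 : ℂ) - z ≠ 0 := by
    intro z hz
    exact Complex.slitPlane_ne_zero (hslit hz)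
  -- H has zero derivative
  set H : ℂ → ℂ := fun z => p.sum z * Complex.exp (-(α : ℂ) * Complex.log (1 - z)) with hH
  have hHderiv : ∀ z ∈ Metric.ball (0:ℂ) 1, HasDerivAt H 0 z := by
    intro z hz
    rw [Metric.mem_ball, dist_zero_right] at hz
    have hd1 : HasDerivAt (fun z : ℂ => 1 - z) (-1) z := by
      simpa using (hasDerivAt_id z).const_sub 1
    have hd2 : HasDerivAt (fun z : ℂ => Complex.log (1 - z)) (-1 / (1 - z)) z :=
      hd1.clog (hslit hz)
    have hd3 : HasDerivAt (fun z : ℂ => -(α:ℂ) * Complex.log (1 - z))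
        (-(α:ℂ) * (-1 / (1 - z))) z := hd2.const_mul _
    have hd4 := hd3.cexp
    have hd5 := (hdiff hz).hasDerivAt.mul hd4
    refine hd5.congr_deriv (Eq.symm ?_)
    have e2 := hODE hz
    have hz1 : (1:ℂ) - z ≠ 0 := hne hz
    have hX : (1 - z) * (deriv p.sum z * Complex.exp (-(α:ℂ) * Complex.log (1 - z))
        + p.sum z * (Complex.exp (-(α:ℂ) * Complex.log (1 - z)) * (-(α:ℂ) * (-1 / (1 - z)))))
        = 0 := by
      simp only [neg_mul]
      field_simp
      linear_combination Complex.exp (-((α:ℂ) * Complex.log (1 - z))) * e2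
    rcases mul_eq_zero.mp hX with h | h
    · exact absurd h hz1
    · exact h.symm
  -- H constant on ball
  have hHconst : ∀ z ∈ Metric.ball (0:ℂ) 1, H z = H 0 := by
    intro z hz
    have hdiffOn : DifferentiableOn ℂ H (Metric.ball (0:ℂ) 1) := fun w hw =>
      ((hHderiv w hw).differentiableAt).differentiableWithinAt
    have hbound : ∀ w ∈ Metric.ball (0:ℂ) 1, ‖fderivWithin ℂ H (Metric.ball (0:ℂ) 1) w‖ ≤ 0 := by
      intro w hw
      have : fderivWithin ℂ H (Metric.ball (0:ℂ) 1) w = fderiv ℂ H w :=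
        fderivWithin_of_isOpen Metric.isOpen_ball hw
      rw [this, ((hHderiv w hw).hasFDerivAt).fderiv]
      simp
    have hmv := (convex_ball (0:ℂ) 1).norm_image_sub_le_of_norm_fderivWithin_le
      hdiffOn hbound (Metric.mem_ball_self one_pos) hz
    have h9 : ‖H z - H 0‖ ≤ 0 := by simpa using hmv
    have h10 : H z - H 0 = 0 :=
      norm_le_zero_iff.mp h9
    exact sub_eq_zero.mp h10
  -- conclude
  intro z hz
  have hzball : z ∈ Metric.ball (0:ℂ) 1 := by rwa [Metric.mem_ball, dist_zero_right]
  have hH0 : H 0 = 1 := by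
    have hF0 : p.sum 0 = 1 := by
      have hA := (hFsum (by norm_num : ‖(0:ℂ)‖ < 1))
      have h0 : HasSum (fun n : ℕ => c n * (0:ℂ) ^ n) (c 0 * (0:ℂ) ^ 0) :=
        hasSum_single 0 (fun b hb => by simp [zero_pow hb])
      have := hA.unique (by simpa using h0)
      rw [this, hc]; simp [gcoef_zero]
    rw [hH]; simp [hF0]
  have := hHconst z hzball
  rw [hH0] at this
  have hexp : p.sum z = Complex.exp ((α : ℂ) * Complex.log (1 - z)) := by
    have he : Complex.exp (-(α:ℂ) * Complex.log (1-z)) * Complex.exp ((α:ℂ) * Complex.log (1-z)) = 1 := by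
      rw [← Complex.exp_add]; ring_nf; exact Complex.exp_zero
    calc p.sum z = (p.sum z * Complex.exp (-(α:ℂ) * Complex.log (1-z)))
        * Complex.exp ((α:ℂ) * Complex.log (1-z)) := by
          rw [mul_assoc, he, mul_one]
      _ = Complex.exp ((α:ℂ) * Complex.log (1-z)) := by
          rw [show p.sum z * Complex.exp (-(α:ℂ) * Complex.log (1-z)) = 1 from this, one_mul]
  rw [(hFsum hz).tsum_eq, hexp, Complex.cpow_def_of_ne_zero (hne hz), mul_comm]

end S3

section S3b
variable {α : ℝ} (h1 : 1 < α) (h2 : α < 2)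
include h1 h2

lemma F_eq_on_circle (z : ℂ) (hz : ‖z‖ = 1) :
    ∑' k, ((gcoef α k : ℝ) : ℂ) * z ^ k = (1 - z) ^ (α : ℂ) := by
  rcases eq_or_ne z 1 with rfl | hz1
  · have e1 : ∑' k, ((gcoef α k : ℝ) : ℂ) * (1:ℂ) ^ k = ((∑' k, gcoef α k : ℝ) : ℂ) := by
      rw [Complex.ofReal_tsum]
      simp
    rw [e1, gcoef_tsum_zero h1 h2, sub_self,
      Complex.zero_cpow (by exact_mod_cast (by linarith : α ≠ 0))]
    simp
  · have hre : z.re ≤ 1 := by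
      have := Complex.re_le_norm z
      rw [hz] at this
      exact this
    have hslit : (1 - z) ∈ Complex.slitPlane := by
      rcases eq_or_ne z.re 1 with hre1 | hre1
      · right
        have him : z.im ≠ 0 := by
          intro h0
          apply hz1
          have habs : ‖z‖ = 1 := hz
          apply Complex.ext <;> simp [hre1, h0]
        simpa [Complex.sub_im] using him
      · left
        simp only [Complex.sub_re, Complex.one_re]
        have : z.re < 1 := lt_of_le_of_ne hre hre1
        linarith
    have hIoo : Set.Ioo (-1:ℝ) 1 ∈ nhdsWithin (1:ℝ) (Set.Iio 1) :=
      Ioo_mem_nhdsLT_of_mem ⟨by norm_num, le_refl _⟩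
    have hLHS : Tendsto (fun r : ℝ => ∑' k, ((gcoef α k : ℝ):ℂ) * ((r:ℂ)*z)^k)
        (nhdsWithin (1:ℝ) (Set.Iio 1)) (nhds (∑' k, ((gcoef α k : ℝ):ℂ) * z^k)) := by
      apply tendsto_tsum_of_dominated_convergence (bound := fun k => |gcoef α k|)
        (gcoef_abs_summable h1 h2)
      · intro k
        have hcont : ContinuousAt (fun r : ℝ => ((gcoef α k : ℝ):ℂ) * ((r:ℂ)*z)^k) 1 := by
          apply ContinuousAt.mul continuousAt_const
          exact (ContinuousAt.mul (Complex.continuous_ofReal.continuousAt) continuousAt_const).pow k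
        have h5 : Tendsto (fun r : ℝ => ((gcoef α k : ℝ):ℂ) * ((r:ℂ)*z)^k)
            (nhdsWithin (1:ℝ) (Set.Iio 1)) (nhds (((gcoef α k : ℝ):ℂ) * (((1:ℝ):ℂ)*z)^k)) :=
          hcont.tendsto.mono_left nhdsWithin_le_nhds
        simpa using h5
      · filter_upwards [hIoo] with r hr k
        have hrabs : |r| ≤ 1 := by
          rw [abs_le]; exact ⟨hr.1.le, hr.2.le⟩
        calc ‖((gcoef α k : ℝ):ℂ) * ((r:ℂ)*z)^k‖ = |gcoef α k| * |r| ^ k := by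
              simp [norm_mul, norm_pow, Complex.norm_real, Real.norm_eq_abs, hz]
          _ ≤ |gcoef α k| * 1 := by
              apply mul_le_mul_of_nonneg_left _ (abs_nonneg _)
              exact pow_le_one₀ (abs_nonneg r) hrabs
          _ = |gcoef α k| := mul_one _
    have hid : ∀ᶠ r : ℝ in nhdsWithin (1:ℝ) (Set.Iio 1),
        (∑' k, ((gcoef α k : ℝ):ℂ) * ((r:ℂ)*z)^k) = (1 - (r:ℂ)*z)^(α:ℂ) := by
      filter_upwards [hIoo] with r hr
      apply F_eq_on_ball h1 h2
      rw [norm_mul, Complex.norm_real, hz, mul_one, Real.norm_eq_abs, abs_lt]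
      exact ⟨hr.1, hr.2⟩
    have hRHS : Tendsto (fun r : ℝ => (1 - (r:ℂ)*z)^(α:ℂ))
        (nhdsWithin (1:ℝ) (Set.Iio 1)) (nhds ((1-z)^(α:ℂ))) := by
      have hc1 : ContinuousAt (fun r : ℝ => 1 - (r:ℂ)*z) 1 := by
        apply ContinuousAt.sub continuousAt_const
        exact (Complex.continuous_ofReal.continuousAt).mul continuousAt_const
      have hc2 : ContinuousAt (fun w : ℂ => w ^ (α:ℂ)) (1 - z) :=
        continuousAt_cpow_const hslit
      have h6 : Tendsto (fun r : ℝ => (1 - (r:ℂ)*z)^(α:ℂ)) (nhds 1)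
          (nhds ((1 - ((1:ℝ):ℂ)*z)^(α:ℂ))) := by
        apply ContinuousAt.tendsto
        have hc2' : ContinuousAt (fun w : ℂ => w ^ (α:ℂ)) (1 - ((1:ℝ):ℂ) * z) := by
          have e : (1 : ℂ) - ((1:ℝ):ℂ) * z = 1 - z := by push_cast; ring
          rw [e]; exact hc2
        exact ContinuousAt.comp (x := (1:ℝ)) (f := fun r : ℝ => 1 - (r:ℂ)*z) hc2' hc1
      have h7 := h6.mono_left (nhdsWithin_le_nhds (s := Set.Iio 1))
      simpa using h7
    exact tendsto_nhds_unique (hLHS.congr' hid) hRHS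

end S3b


section S4
variable {α : ℝ} (h1 : 1 < α) (h2 : α < 2)
include h1 h2

lemma genFun_eq (x : ℝ) : genFun α x =
    Complex.exp (-(Complex.I * x)) * ((1 - Complex.exp (Complex.I * x)) ^ (α : ℂ)
      * ((α : ℂ)/2 + ((2 - α : ℝ) : ℂ)/2 * Complex.exp (Complex.I * x))) := by
  set z : ℂ := Complex.exp (Complex.I * x) with hzdef
  have hz : ‖z‖ = 1 := by
    rw [hzdef, mul_comm, Complex.norm_exp_ofReal_mul_I]
  have hSg : Summable (fun k : ℕ => ((gcoef α k : ℝ) : ℂ) * z ^ k) := by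
    apply Summable.of_norm
    have : (fun k : ℕ => ‖((gcoef α k : ℝ) : ℂ) * z ^ k‖) = fun k => |gcoef α k| := by
      funext k
      rw [norm_mul, norm_pow, hz, one_pow, mul_one, Complex.norm_real, Real.norm_eq_abs]
    rw [this]
    exact gcoef_abs_summable h1 h2
  have hSg1 : Summable (fun k : ℕ => ((gcoef α k : ℝ) : ℂ) * z ^ (k+1)) := by
    have e : (fun k : ℕ => ((gcoef α k : ℝ) : ℂ) * z ^ (k+1))
        = fun k => z * (((gcoef α k : ℝ) : ℂ) * z ^ k) := by
      funext k; ring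
    rw [e]; exact hSg.mul_left z
  -- the shifted sequence u
  set u : ℕ → ℂ := fun k => Nat.casesOn k 0 (fun m => ((gcoef α m : ℝ) : ℂ) * z ^ (m+1)) with hu
  have hSu : Summable u := by
    rw [← summable_nat_add_iff 1]
    exact hSg1
  have hu0 : u 0 = 0 := rfl
  have hus : ∀ m : ℕ, u (m+1) = ((gcoef α m : ℝ) : ℂ) * z ^ (m+1) := fun m => rfl
  have hutsum : ∑' k, u k = z * ∑' k, ((gcoef α k : ℝ) : ℂ) * z ^ k := by
    rw [Summable.tsum_eq_zero_add hSu, hu0, zero_add]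
    calc ∑' n : ℕ, u (n+1) = ∑' n : ℕ, z * (((gcoef α n : ℝ) : ℂ) * z ^ n) := by
          apply tsum_congr; intro n; rw [hus]; ring
      _ = z * ∑' n : ℕ, ((gcoef α n : ℝ) : ℂ) * z ^ n := tsum_mul_left
  -- coefficient identity
  have hwterm : ∀ k : ℕ, ((wcoef α k : ℝ) : ℂ) * z ^ k
      = (α : ℂ)/2 * (((gcoef α k : ℝ) : ℂ) * z ^ k) + ((2 - α : ℝ) : ℂ)/2 * u k := by
    intro k
    cases k with
    | zero =>
      rw [hu0]
      simp only [wcoef]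
      push_cast
      ring
    | succ m =>
      rw [hus]
      simp only [wcoef]
      push_cast
      ring
  -- the series for genFun
  have hterm2 : ∀ k : ℕ, (wcoef α k : ℂ) * Complex.exp (Complex.I * ((k : ℂ) - 1) * (x : ℂ))
      = Complex.exp (-(Complex.I * x)) * (((wcoef α k : ℝ) : ℂ) * z ^ k) := by
    intro k
    have e : Complex.I * ((k : ℂ) - 1) * (x : ℂ) = -(Complex.I * x) + (Complex.I * x) * k := by
      ring
    rw [e, Complex.exp_add, hzdef, ← Complex.exp_nat_mul]
    ring_nf
  rw [genFun]
  rw [tsum_congr hterm2, tsum_mul_left]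
  congr 1
  have : (fun k : ℕ => ((wcoef α k : ℝ) : ℂ) * z ^ k)
      = fun k => (α : ℂ)/2 * (((gcoef α k : ℝ) : ℂ) * z ^ k) + ((2 - α : ℝ) : ℂ)/2 * u k := by
    funext k; exact hwterm k
  rw [this, Summable.tsum_add (hSg.mul_left _) (hSu.mul_left _), tsum_mul_left, tsum_mul_left,
    hutsum, F_eq_on_circle h1 h2 z hz]
  ring

end S4


section S5
variable {a : ℝ} (ha0 : 0 < a) (ha1 : a < 1)

lemma Efact (a u c t : ℝ) :
    (Real.cos (u+c)*Real.cos t + a*Real.sin (u+c)*Real.sin t)^2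
      - Real.cos c^2 * (Real.cos t^2 + a^2*Real.sin t^2)
    = (Real.cos t*Real.sin (u+2*c) - a*Real.sin t*Real.cos (u+2*c))
      * (a*Real.sin t*Real.cos u - Real.cos t*Real.sin u) := by
  have ht := Real.sin_sq_add_cos_sq t
  have hu := Real.sin_sq_add_cos_sq u
  rw [show u + 2*c = (u+c)+c by ring, Real.cos_add (u+c) c, Real.sin_add (u+c) c,
    Real.cos_add u c, Real.sin_add u c]
  linear_combination (a^2*Real.sin u^2*Real.cos c^2 - a^2*Real.cos c^2
      + a^2*Real.cos u^2*Real.cos c^2) * ht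
    + (Real.cos c^2*Real.cos t^2 + a^2*Real.cos c^2 - a^2*Real.cos c^2*Real.cos t^2) * hu

private lemma hasDerivAt_B (a t : ℝ) :
    HasDerivAt (fun t => a * Real.sin t * Real.cos (a*t) - Real.cos t * Real.sin (a*t))
      ((1 - a^2) * (Real.sin t * Real.sin (a*t))) t := by
  have hat : HasDerivAt (fun t : ℝ => a*t) a t := by
    simpa using (hasDerivAt_id t).const_mul a
  have hca : HasDerivAt (fun t : ℝ => Real.cos (a*t)) (-Real.sin (a*t) * a) t :=
    (Real.hasDerivAt_cos (a*t)).comp t hat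
  have hsa : HasDerivAt (fun t : ℝ => Real.sin (a*t)) (Real.cos (a*t) * a) t :=
    (Real.hasDerivAt_sin (a*t)).comp t hat
  have h := (((Real.hasDerivAt_sin t).const_mul a).mul hca).sub
    ((Real.hasDerivAt_cos t).mul hsa)
  refine h.congr_deriv ?_
  ring

private lemma hasDerivAt_A (a k t : ℝ) :
    HasDerivAt (fun t => Real.cos t * Real.sin (a*t+k) - a * Real.sin t * Real.cos (a*t+k))
      (-((1 - a^2) * (Real.sin t * Real.sin (a*t+k)))) t := by
  have hat : HasDerivAt (fun t : ℝ => a*t+k) a t := by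
    simpa using ((hasDerivAt_id t).const_mul a).add_const k
  have hca : HasDerivAt (fun t : ℝ => Real.cos (a*t+k)) (-Real.sin (a*t+k) * a) t :=
    (Real.hasDerivAt_cos (a*t+k)).comp t hat (h₂ := Real.cos)
  have hsa : HasDerivAt (fun t : ℝ => Real.sin (a*t+k)) (Real.cos (a*t+k) * a) t :=
    (Real.hasDerivAt_sin (a*t+k)).comp t hat (h₂ := Real.sin)
  have h := ((Real.hasDerivAt_cos t).mul hsa).sub
    (((Real.hasDerivAt_sin t).const_mul a).mul hca)
  refine h.congr_deriv ?_
  ring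

include ha0 ha1

lemma B_nonneg : ∀ t ∈ Set.Icc (0:ℝ) π,
    0 ≤ a * Real.sin t * Real.cos (a*t) - Real.cos t * Real.sin (a*t) := by
  have hmono : MonotoneOn
      (fun t => a * Real.sin t * Real.cos (a*t) - Real.cos t * Real.sin (a*t))
      (Set.Icc (0:ℝ) π) := by
    apply monotoneOn_of_deriv_nonneg (convex_Icc 0 π)
    · apply Continuous.continuousOn; fun_prop
    · intro x hx
      exact (hasDerivAt_B a x).differentiableAt.differentiableWithinAt
    · intro x hx
      rw [interior_Icc] at hx
      rw [(hasDerivAt_B a x).deriv]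
      have hx0 : 0 ≤ x := hx.1.le
      have hxpi : x ≤ π := hx.2.le
      have h1 : 0 ≤ Real.sin x := Real.sin_nonneg_of_nonneg_of_le_pi hx0 hxpi
      have h2 : 0 ≤ Real.sin (a*x) := by
        apply Real.sin_nonneg_of_nonneg_of_le_pi (by positivity)
        nlinarith
      have h3 : 0 ≤ 1 - a^2 := by nlinarith
      exact mul_nonneg h3 (mul_nonneg h1 h2)
  intro t ht
  have h0 : (0:ℝ) ∈ Set.Icc (0:ℝ) π := ⟨le_refl 0, Real.pi_pos.le⟩
  have := hmono h0 ht ht.1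
  simpa using this

lemma A_nonneg : ∀ t ∈ Set.Icc (0:ℝ) π,
    0 ≤ Real.cos t * Real.sin (a*t+(1-a)*π) - a * Real.sin t * Real.cos (a*t+(1-a)*π) := by
  have hanti : AntitoneOn
      (fun t => Real.cos t * Real.sin (a*t+(1-a)*π) - a * Real.sin t * Real.cos (a*t+(1-a)*π))
      (Set.Icc (0:ℝ) π) := by
    apply antitoneOn_of_deriv_nonpos (convex_Icc 0 π)
    · apply Continuous.continuousOn; fun_prop
    · intro x hx
      exact (hasDerivAt_A a ((1-a)*π) x).differentiableAt.differentiableWithinAt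
    · intro x hx
      rw [interior_Icc] at hx
      rw [(hasDerivAt_A a ((1-a)*π) x).deriv]
      have h1 : 0 ≤ Real.sin x := Real.sin_nonneg_of_nonneg_of_le_pi hx.1.le hx.2.le
      have h2 : 0 ≤ Real.sin (a*x+(1-a)*π) := by
        apply Real.sin_nonneg_of_nonneg_of_le_pi
        · have : 0 ≤ (1-a)*π := by
            apply mul_nonneg (by linarith) Real.pi_pos.le
          nlinarith [hx.1.le]
        · nlinarith [hx.2.le, Real.pi_pos]
      have h3 : 0 ≤ 1 - a^2 := by nlinarith
      have := mul_nonneg h3 (mul_nonneg h1 h2)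
      linarith
  intro t ht
  have hpi : π ∈ Set.Icc (0:ℝ) π := ⟨Real.pi_pos.le, le_refl π⟩
  have := hanti ht hpi ht.2
  have hval : Real.cos π * Real.sin (a*π+(1-a)*π) - a * Real.sin π * Real.cos (a*π+(1-a)*π)
      = 0 := by
    rw [show a*π+(1-a)*π = π by ring]
    simp
  simp only at this
  linarith [hval ▸ this]

lemma P_lower : ∀ t ∈ Set.Icc (0:ℝ) π,
    a ≤ Real.cos (a*t+(1-a)*(π/2)) * Real.cos t + a * Real.sin (a*t+(1-a)*(π/2)) * Real.sin t := by
  set c := (1-a)*(π/2) with hc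
  have hc0 : 0 ≤ c := by
    rw [hc]; apply mul_nonneg (by linarith); positivity
  have hder : ∀ x : ℝ, HasDerivAt
      (fun t => Real.cos (a*t+c) * Real.cos t + a * Real.sin (a*t+c) * Real.sin t)
      (-((1 - a^2) * (Real.cos (a*x+c) * Real.sin x))) x := by
    intro x
    have hat : HasDerivAt (fun t : ℝ => a*t+c) a x := by
      simpa using ((hasDerivAt_id x).const_mul a).add_const c
    have hca : HasDerivAt (fun t : ℝ => Real.cos (a*t+c)) (-Real.sin (a*x+c) * a) x :=
      (Real.hasDerivAt_cos (a*x+c)).comp x hat (h₂ := Real.cos)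
    have hsa : HasDerivAt (fun t : ℝ => Real.sin (a*t+c)) (Real.cos (a*x+c) * a) x :=
      (Real.hasDerivAt_sin (a*x+c)).comp x hat (h₂ := Real.sin)
    have h := (hca.mul (Real.hasDerivAt_cos x)).add
      ((hsa.const_mul a).mul (Real.hasDerivAt_sin x))
    refine h.congr_deriv ?_
    ring
  have hmid : Real.cos (a*(π/2)+c) * Real.cos (π/2) + a * Real.sin (a*(π/2)+c) * Real.sin (π/2)
      = a := by
    rw [show a*(π/2)+c = π/2 by rw [hc]; ring]
    simp
  intro t ht
  rcases le_total t (π/2) with hle | hge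
  · -- antitone on [0, π/2]
    have hanti : AntitoneOn
        (fun t => Real.cos (a*t+c) * Real.cos t + a * Real.sin (a*t+c) * Real.sin t)
        (Set.Icc (0:ℝ) (π/2)) := by
      apply antitoneOn_of_deriv_nonpos (convex_Icc 0 (π/2))
      · apply Continuous.continuousOn; fun_prop
      · intro x hx
        exact (hder x).differentiableAt.differentiableWithinAt
      · intro x hx
        rw [interior_Icc] at hx
        rw [(hder x).deriv]
        have h1 : 0 ≤ Real.sin x :=
          Real.sin_nonneg_of_nonneg_of_le_pi hx.1.le (by linarith [hx.2, Real.pi_pos])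
        have h2 : 0 ≤ Real.cos (a*x+c) := by
          apply Real.cos_nonneg_of_mem_Icc
          constructor
          · have := Real.pi_pos; nlinarith [hx.1.le]
          · rw [hc]; nlinarith [hx.2.le, Real.pi_pos]
        have h3 : 0 ≤ 1 - a^2 := by nlinarith
        have := mul_nonneg h3 (mul_nonneg h2 h1)
        linarith
    have hmem : t ∈ Set.Icc (0:ℝ) (π/2) := ⟨ht.1, hle⟩
    have hmem2 : (π/2) ∈ Set.Icc (0:ℝ) (π/2) := ⟨by positivity, le_refl _⟩
    have := hanti hmem hmem2 hle
    simp only at this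
    linarith [hmid ▸ this]
  · -- monotone on [π/2, π]
    have hmono : MonotoneOn
        (fun t => Real.cos (a*t+c) * Real.cos t + a * Real.sin (a*t+c) * Real.sin t)
        (Set.Icc (π/2) π) := by
      apply monotoneOn_of_deriv_nonneg (convex_Icc (π/2) π)
      · apply Continuous.continuousOn; fun_prop
      · intro x hx
        exact (hder x).differentiableAt.differentiableWithinAt
      · intro x hx
        rw [interior_Icc] at hx
        rw [(hder x).deriv]
        have h1 : 0 ≤ Real.sin x :=
          Real.sin_nonneg_of_nonneg_of_le_pi (by linarith [hx.1, Real.pi_pos]) hx.2.le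
        have h2 : Real.cos (a*x+c) ≤ 0 := by
          apply Real.cos_nonpos_of_pi_div_two_le_of_le
          · rw [hc]; nlinarith [hx.1.le, Real.pi_pos]
          · rw [hc]; nlinarith [hx.2.le, Real.pi_pos]
        have h3 : 0 ≤ 1 - a^2 := by nlinarith
        have := mul_nonneg h3 (mul_nonneg (neg_nonneg.mpr h2) h1)
        nlinarith
    have hmem : t ∈ Set.Icc (π/2) π := ⟨hge, ht.2⟩
    have hmem2 : (π/2) ∈ Set.Icc (π/2) π := ⟨le_refl _, by linarith [Real.pi_pos]⟩
    have := hmono hmem2 hmem hge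
    simp only at this
    linarith [hmid ▸ this]

lemma trig_main : ∀ t ∈ Set.Icc (0:ℝ) π,
    Real.cos ((1-a)*(π/2)) * Real.sqrt (Real.cos t^2 + a^2 * Real.sin t^2)
      ≤ Real.cos (a*t+(1-a)*(π/2)) * Real.cos t + a * Real.sin (a*t+(1-a)*(π/2)) * Real.sin t := by
  intro t ht
  set c := (1-a)*(π/2) with hc
  have hccos : 0 ≤ Real.cos c := by
    apply Real.cos_nonneg_of_mem_Icc
    constructor
    · have := Real.pi_pos; nlinarith
    · have := Real.pi_pos; rw [hc]; nlinarith
  have hq0 : 0 ≤ Real.cos c * Real.sqrt (Real.cos t^2 + a^2 * Real.sin t^2) :=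
    mul_nonneg hccos (Real.sqrt_nonneg _)
  have hP0 : 0 ≤ Real.cos (a*t+c) * Real.cos t + a * Real.sin (a*t+c) * Real.sin t := by
    have := P_lower ha0 ha1 t ht
    linarith
  have hsq : (Real.cos c * Real.sqrt (Real.cos t^2 + a^2 * Real.sin t^2))^2
      ≤ (Real.cos (a*t+c) * Real.cos t + a * Real.sin (a*t+c) * Real.sin t)^2 := by
    have hE := Efact a (a*t) c t
    have hA := A_nonneg ha0 ha1 t ht
    have hB := B_nonneg ha0 ha1 t ht
    have h2c : a*t + 2*c = a*t + (1-a)*π := by rw [hc]; ring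
    rw [h2c] at hE
    have hAB : 0 ≤ (Real.cos t*Real.sin (a*t+(1-a)*π) - a*Real.sin t*Real.cos (a*t+(1-a)*π))
        * (a*Real.sin t*Real.cos (a*t) - Real.cos t*Real.sin (a*t)) := mul_nonneg hA hB
    have hsqrt : Real.sqrt (Real.cos t^2 + a^2 * Real.sin t^2)^2
        = Real.cos t^2 + a^2 * Real.sin t^2 := Real.sq_sqrt (by positivity)
    rw [mul_pow, hsqrt]
    nlinarith [hE]
  calc Real.cos c * Real.sqrt (Real.cos t^2 + a^2 * Real.sin t^2)
      = Real.sqrt ((Real.cos c * Real.sqrt (Real.cos t^2 + a^2 * Real.sin t^2))^2) :=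
        (Real.sqrt_sq hq0).symm
    _ ≤ Real.sqrt ((Real.cos (a*t+c) * Real.cos t + a * Real.sin (a*t+c) * Real.sin t)^2) :=
        Real.sqrt_le_sqrt hsq
    _ = _ := Real.sqrt_sq hP0

end S5


section S6
variable {α : ℝ} (h1 : 1 < α) (h2 : α < 2)
include h1 h2

lemma cpow_polar (t : ℝ) (ht0 : 0 < t) (htpi : t < π) :
    (1 - Complex.exp (Complex.I * ((2*t : ℝ) : ℂ))) ^ (α : ℂ)
      = ((((2*Real.sin t) ^ α : ℝ)) : ℂ)
        * Complex.exp (((α*(t - π/2) : ℝ) : ℂ) * Complex.I) := by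
  have hs : 0 < Real.sin t := Real.sin_pos_of_pos_of_lt_pi ht0 htpi
  have h2s : (0:ℝ) < 2 * Real.sin t := by linarith
  set u : ℂ := ((Real.log (2*Real.sin t) : ℝ) : ℂ) + ((t - π/2 : ℝ) : ℂ) * Complex.I with hu
  have hkey : Complex.exp u = 1 - Complex.exp (Complex.I * ((2*t : ℝ) : ℂ)) := by
    rw [hu, Complex.exp_add, ← Complex.ofReal_exp, Real.exp_log h2s]
    rw [show Complex.I * ((2*t : ℝ) : ℂ) = ((2*t : ℝ) : ℂ) * Complex.I by ring]
    apply Complex.ext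
    · simp only [Complex.mul_re, Complex.ofReal_re, Complex.ofReal_im,
        Complex.exp_ofReal_mul_I_re, Complex.exp_ofReal_mul_I_im, Complex.sub_re, Complex.one_re]
      rw [Real.cos_sub, Real.sin_sub, Real.cos_pi_div_two, Real.sin_pi_div_two,
        Real.cos_two_mul]
      have := Real.sin_sq_add_cos_sq t
      nlinarith
    · simp only [Complex.mul_im, Complex.ofReal_re, Complex.ofReal_im,
        Complex.exp_ofReal_mul_I_re, Complex.exp_ofReal_mul_I_im, Complex.sub_im, Complex.one_im]
      rw [Real.cos_sub, Real.sin_sub, Real.cos_pi_div_two, Real.sin_pi_div_two,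
        Real.sin_two_mul]
      ring
  have hw0 : (1 : ℂ) - Complex.exp (Complex.I * ((2*t : ℝ) : ℂ)) ≠ 0 := by
    rw [← hkey]; exact Complex.exp_ne_zero u
  have hlog : Complex.log (1 - Complex.exp (Complex.I * ((2*t : ℝ) : ℂ))) = u := by
    rw [← hkey]
    apply Complex.log_exp
    · rw [hu]
      simp only [Complex.add_im, Complex.ofReal_im, Complex.mul_im, Complex.ofReal_re,
        Complex.I_im, Complex.I_re]
      have := Real.pi_pos
      nlinarith
    · rw [hu]
      simp only [Complex.add_im, Complex.ofReal_im, Complex.mul_im, Complex.ofReal_re,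
        Complex.I_im, Complex.I_re]
      have := Real.pi_pos
      nlinarith
  rw [Complex.cpow_def_of_ne_zero hw0, hlog]
  rw [show u * (α:ℂ) = ((α * Real.log (2*Real.sin t) : ℝ) : ℂ)
      + ((α*(t - π/2) : ℝ) : ℂ) * Complex.I by rw [hu]; push_cast; ring]
  rw [Complex.exp_add, ← Complex.ofReal_exp]
  congr 2
  rw [Real.rpow_def_of_pos h2s]
  ring_nf

lemma bracket_eq (t : ℝ) :
    (α : ℂ)/2 + ((2 - α : ℝ) : ℂ)/2 * Complex.exp (Complex.I * ((2*t : ℝ) : ℂ))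
      = Complex.exp (((t : ℝ) : ℂ) * Complex.I)
        * (((Real.cos t : ℝ) : ℂ) - (((α-1) * Real.sin t : ℝ) : ℂ) * Complex.I) := by
  rw [show Complex.I * ((2*t : ℝ) : ℂ) = ((2*t : ℝ) : ℂ) * Complex.I by ring]
  apply Complex.ext
  · simp only [Complex.add_re, Complex.div_re, Complex.mul_re, Complex.sub_re, Complex.sub_im,
      Complex.ofReal_re, Complex.ofReal_im, Complex.I_re, Complex.I_im,
      Complex.exp_ofReal_mul_I_re, Complex.exp_ofReal_mul_I_im, Complex.normSq_ofNat,
      Complex.mul_im, Complex.add_im]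
    rw [Real.cos_two_mul]
    have := Real.sin_sq_add_cos_sq t
    norm_num
    nlinarith
  · simp only [Complex.add_re, Complex.div_re, Complex.mul_re, Complex.sub_re, Complex.sub_im,
      Complex.ofReal_re, Complex.ofReal_im, Complex.I_re, Complex.I_im,
      Complex.exp_ofReal_mul_I_re, Complex.exp_ofReal_mul_I_im, Complex.normSq_ofNat,
      Complex.mul_im, Complex.add_im]
    rw [Real.sin_two_mul]
    norm_num
    ring

lemma genFun_polar (t : ℝ) (ht0 : 0 < t) (htpi : t < π) :
    genFun α (2*t) = -(((((2*Real.sin t) ^ α : ℝ)) : ℂ)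
      * Complex.exp ((((α-1)*t + π*(2-α)/2 : ℝ) : ℂ) * Complex.I)
      * (((Real.cos t : ℝ) : ℂ) - (((α-1) * Real.sin t : ℝ) : ℂ) * Complex.I)) := by
  rw [genFun_eq h1 h2 (2*t), cpow_polar h1 h2 t ht0 htpi, bracket_eq h1 h2 t]
  have hcomb : Complex.exp (-(Complex.I * ((2*t:ℝ):ℂ)))
      * Complex.exp (((α*(t-π/2) : ℝ):ℂ) * Complex.I)
      * Complex.exp (((t:ℝ):ℂ) * Complex.I)
      = -Complex.exp ((((α-1)*t + π*(2-α)/2 : ℝ):ℂ) * Complex.I) := by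
    rw [← Complex.exp_add, ← Complex.exp_add]
    have he : -(Complex.I * ((2*t:ℝ):ℂ)) + ((α*(t-π/2) : ℝ):ℂ) * Complex.I + ((t:ℝ):ℂ) * Complex.I
        = (((α-1)*t + π*(2-α)/2 : ℝ):ℂ) * Complex.I + -(((π:ℝ):ℂ) * Complex.I) := by
      push_cast; ring
    rw [he, Complex.exp_add, Complex.exp_neg, Complex.exp_pi_mul_I]
    field_simp
  calc Complex.exp (-(Complex.I * ((2*t:ℝ):ℂ)))
      * ((((2*Real.sin t) ^ α : ℝ) : ℂ) * Complex.exp (((α*(t - π/2) : ℝ) : ℂ) * Complex.I)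
        * (Complex.exp (((t : ℝ) : ℂ) * Complex.I)
          * (((Real.cos t : ℝ) : ℂ) - (((α-1) * Real.sin t : ℝ) : ℂ) * Complex.I)))
      = (Complex.exp (-(Complex.I * ((2*t:ℝ):ℂ)))
          * Complex.exp (((α*(t-π/2) : ℝ):ℂ) * Complex.I)
          * Complex.exp (((t:ℝ):ℂ) * Complex.I))
        * ((((2*Real.sin t) ^ α : ℝ) : ℂ)
          * (((Real.cos t : ℝ) : ℂ) - (((α-1) * Real.sin t : ℝ) : ℂ) * Complex.I)) := by ring
    _ = _ := by rw [hcomb]; ring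

lemma genFun_re (t : ℝ) (ht0 : 0 < t) (htpi : t < π) :
    (-(genFun α (2*t))).re
      = (2*Real.sin t)^α * (Real.cos ((α-1)*t + π*(2-α)/2) * Real.cos t
        + (α-1) * Real.sin ((α-1)*t + π*(2-α)/2) * Real.sin t) := by
  rw [genFun_polar h1 h2 t ht0 htpi, neg_neg]
  simp only [Complex.mul_re, Complex.mul_im, Complex.sub_re, Complex.sub_im,
    Complex.ofReal_re, Complex.ofReal_im, Complex.I_re, Complex.I_im,
    Complex.exp_ofReal_mul_I_re, Complex.exp_ofReal_mul_I_im]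
  ring

lemma genFun_abs (t : ℝ) (ht0 : 0 < t) (htpi : t < π) :
    ‖genFun α (2*t)‖
      = (2*Real.sin t)^α * Real.sqrt (Real.cos t^2 + (α-1)^2 * Real.sin t^2) := by
  have hs : 0 < Real.sin t := Real.sin_pos_of_pos_of_lt_pi ht0 htpi
  rw [genFun_polar h1 h2 t ht0 htpi]
  rw [norm_neg, norm_mul, norm_mul, Complex.norm_exp_ofReal_mul_I, mul_one,
    Complex.norm_real, Real.norm_eq_abs, _root_.abs_of_nonneg (Real.rpow_nonneg (by linarith) α)]
  congr 1
  rw [Complex.norm_def, Complex.normSq_apply]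
  simp only [Complex.sub_re, Complex.sub_im, Complex.mul_re, Complex.mul_im,
    Complex.ofReal_re, Complex.ofReal_im, Complex.I_re, Complex.I_im]
  congr 1
  ring

lemma genFun_abs_pos (t : ℝ) (ht0 : 0 < t) (htpi : t < π) :
    0 < ‖genFun α (2*t)‖ := by
  rw [genFun_abs h1 h2 t ht0 htpi]
  have hs : 0 < Real.sin t := Real.sin_pos_of_pos_of_lt_pi ht0 htpi
  apply mul_pos (Real.rpow_pos_of_pos (by linarith) α)
  apply Real.sqrt_pos.mpr
  have hsc := Real.sin_sq_add_cos_sq t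
  have ha : 0 < (α-1)^2 := by nlinarith
  have hle : (α-1)^2 * Real.cos t^2 ≤ Real.cos t^2 := by
    nlinarith [sq_nonneg (Real.cos t), sq_nonneg (Real.cos t * (α - 1)), sq_nonneg (Real.cos t * (α - 2))]
  nlinarith [sq_nonneg (Real.sin t)]

end S6


section S7
variable {α : ℝ} (h1 : 1 < α) (h2 : α < 2)

lemma genFun_periodic : Function.Periodic (genFun α) (2*π) := by
  intro x
  unfold genFun
  apply tsum_congr
  intro k
  congr 1
  have he : Complex.I * ((k : ℂ) - 1) * ((x + 2*π : ℝ) : ℂ)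
      = Complex.I * ((k : ℂ) - 1) * (x : ℂ) + (((k : ℤ) - 1 : ℤ) : ℂ) * (2 * (π:ℂ) * Complex.I) := by
    push_cast
    ring
  rw [he, Complex.exp_add, Complex.exp_int_mul_two_pi_mul_I]
  rw [mul_one]

include h1 h2

lemma genFun_zero : genFun α 0 = 0 := by
  rw [genFun_eq h1 h2 0]
  have : (1 : ℂ) - Complex.exp (Complex.I * (0:ℝ)) = 0 := by
    simp
  rw [this, Complex.zero_cpow (by exact_mod_cast (by linarith : α ≠ 0))]
  ring

lemma main_ineq : ∀ x : ℝ,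
    Real.cos (π*(2-α)/2) * ‖genFun α x‖ ≤ (-(genFun α x)).re := by
  have key : ∀ t : ℝ, 0 < t → t < π →
      Real.cos (π*(2-α)/2) * ‖genFun α (2*t)‖ ≤ (-(genFun α (2*t))).re := by
    intro t ht0 htpi
    rw [genFun_re h1 h2 t ht0 htpi, genFun_abs h1 h2 t ht0 htpi]
    have htm := trig_main (a := α - 1) (by linarith) (by linarith) t
      ⟨ht0.le, htpi.le⟩
    rw [show (1-(α-1))*(π/2) = π*(2-α)/2 by ring] at htm
    have hR : (0:ℝ) ≤ (2*Real.sin t)^α := Real.rpow_nonneg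
      (by linarith [Real.sin_pos_of_pos_of_lt_pi ht0 htpi]) α
    calc Real.cos (π*(2-α)/2) * ((2*Real.sin t)^α
          * Real.sqrt (Real.cos t^2 + (α-1)^2 * Real.sin t^2))
        = (2*Real.sin t)^α * (Real.cos (π*(2-α)/2)
          * Real.sqrt (Real.cos t^2 + (α-1)^2 * Real.sin t^2)) := by ring
      _ ≤ (2*Real.sin t)^α * (Real.cos ((α-1)*t + π*(2-α)/2) * Real.cos t
          + (α-1) * Real.sin ((α-1)*t + π*(2-α)/2) * Real.sin t) :=
          mul_le_mul_of_nonneg_left htm hR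
  intro x
  obtain ⟨y, hy, hxy⟩ := (genFun_periodic (α := α)).exists_mem_Ico₀
    (by positivity : (0:ℝ) < 2*π) x
  rw [hxy]
  rcases eq_or_lt_of_le hy.1 with hy0 | hy0
  · rw [← hy0, genFun_zero h1 h2]
    simp
  · have := key (y/2) (by linarith) (by linarith [hy.2])
    rwa [show 2*(y/2) = y by ring] at this

theorem genFun_glb :
    IsGLB {r : ℝ | ∃ x : ℝ, genFun α x ≠ 0 ∧
        r = (-(genFun α x)).re / ‖genFun α x‖}
      (Real.cos (π*(2-α)/2)) := by
  constructor
  · rintro r ⟨x, hne, rfl⟩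
    have habs0 : 0 < ‖genFun α x‖ := norm_pos_iff.mpr hne
    rw [le_div_iff₀ habs0]
    exact main_ineq h1 h2 x
  · intro b hb
    -- b is a lower bound; compare with ratio at small t
    set φ : ℝ → ℝ := fun t => (Real.cos ((α-1)*t + π*(2-α)/2) * Real.cos t
        + (α-1) * Real.sin ((α-1)*t + π*(2-α)/2) * Real.sin t)
      / Real.sqrt (Real.cos t^2 + (α-1)^2 * Real.sin t^2) with hφ
    have hφ0 : φ 0 = Real.cos (π*(2-α)/2) := by
      rw [hφ]
      simp
    have hcont : ContinuousAt φ 0 := by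
      apply ContinuousAt.div
      · fun_prop
      · fun_prop
      · simp
    have htend : Tendsto φ (nhdsWithin 0 (Set.Ioi 0)) (nhds (Real.cos (π*(2-α)/2))) := by
      rw [← hφ0]
      exact hcont.tendsto.mono_left nhdsWithin_le_nhds
    apply ge_of_tendsto htend
    filter_upwards [Ioo_mem_nhdsGT_of_mem (Set.mem_Ico.mpr ⟨le_refl (0:ℝ), Real.pi_pos⟩)]
      with t ht
    apply hb
    refine ⟨2*t, ?_, ?_⟩
    · intro h0
      have := genFun_abs_pos h1 h2 t ht.1 ht.2
      rw [h0] at this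
      simp at this
    · rw [genFun_re h1 h2 t ht.1 ht.2, genFun_abs h1 h2 t ht.1 ht.2, hφ]
      have hRpos : (0:ℝ) < (2*Real.sin t)^α := Real.rpow_pos_of_pos
        (by linarith [Real.sin_pos_of_pos_of_lt_pi ht.1 ht.2]) α
      rw [mul_div_mul_left _ _ (ne_of_gt hRpos)]

lemma habs_eq : |Real.cos (α * π / 2)| = Real.cos (π*(2-α)/2) := by
  rw [show α * π / 2 = π - π*(2-α)/2 by ring, Real.cos_pi_sub, abs_neg]
  apply abs_of_pos
  apply Real.cos_pos_of_mem_Ioo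
  constructor
  · have := Real.pi_pos; nlinarith
  · have := Real.pi_pos; nlinarith

end S7

/-- The infimum over all real `x` with `g(α,x) ≠ 0` of `Re(-g(α,x))/|g(α,x)|` equals
`|cos(απ/2)|`; in particular `Re(-g(α,x)) ≥ |cos(απ/2)|·|g(α,x)|` for every real `x`. -/
theorem genFun_ratio_inf (α : ℝ) (hα : α ∈ Set.Ioo (1 : ℝ) 2) :
    IsGLB {r : ℝ | ∃ x : ℝ, genFun α x ≠ 0 ∧
        r = (-(genFun α x)).re / ‖genFun α x‖}
      |Real.cos (α * Real.pi / 2)| ∧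
    ∀ x : ℝ, |Real.cos (α * Real.pi / 2)| * ‖genFun α x‖ ≤ (-(genFun α x)).re := by
  obtain ⟨h1, h2⟩ := hα
  rw [habs_eq h1 h2]
  exact ⟨genFun_glb h1 h2, main_ineq h1 h2⟩
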